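/- Let L be the homotopy Lie algebra associated with a minimal Sullivan model (∧V,d) of a simply-connected space Y. Then d_1-depth(Y) ≥ WL(L), where WL(L) is the greatest integer n such that [L,L]^{(n)} ≠ 0. -/

import Mathlib

/-!
Scaffold: the quadratic part of a minimal Sullivan model `(∧V, d)` of a simply
connected space `Y` (with locally finite rational cohomology), together with its
associated homotopy Lie algebra `L` (so that `sL = Hom(V, ℚ)`), following
Félix–Halperin–Thomas, §21(e).  The data is encoded through

* the perfect pairing `P v x = ⟨v ; sx⟩` between `V` and `sL`,
* the trilinear pairing `D v x y = ⟨d₁ v ; sx, sy⟩` recording the quadratic part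
  `d₁` of the differential, and
* the Lie bracket `br`, determined by `⟨v ; s[x,y]⟩ = (-1)^{deg y + 1} ⟨d₁ v; sx, sy⟩`.
-/

/-- Data of (the quadratic part of) a minimal Sullivan model of a simply connected
space together with the associated homotopy Lie algebra. -/
structure HomotopyLieData : Type 1 where
  /-- the space of generators of the minimal Sullivan model -/
  V : Type
  /-- the (desuspended) homotopy Lie algebra; `sL = Hom(V, ℚ)` -/
  L : Type
  [addV : AddCommGroup V]
  [modV : Module ℚ V]
  [addL : AddCommGroup L]
  [modL : Module ℚ L]
  /-- grading of `V` -/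
  Vg : ℕ → Submodule ℚ V
  /-- grading of `L` -/
  Lg : ℕ → Submodule ℚ L
  internalV : DirectSum.IsInternal Vg
  internalL : DirectSum.IsInternal Lg
  /-- simple connectivity: no generators in degrees `0`, `1` -/
  Vg_zero : Vg 0 = ⊥
  Vg_one : Vg 1 = ⊥
  /-- local finiteness -/
  locFin : ∀ n, FiniteDimensional ℚ (Vg n)
  /-- the pairing `⟨v ; sx⟩ = (-1)^{deg v} (sx)(v)` between `V` and `sL` -/
  P : V →ₗ[ℚ] L →ₗ[ℚ] ℚ
  /-- `D v x y = ⟨d₁ v ; sx, sy⟩`, the quadratic part of the differential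
  evaluated through the trilinear map
  `⟨v ∧ w; sx, sy⟩ = ⟨v;sx⟩⟨w;sy⟩ + (-1)^{|v||w|}⟨w;sx⟩⟨v;sy⟩` -/
  D : V →ₗ[ℚ] L →ₗ[ℚ] L →ₗ[ℚ] ℚ
  /-- the Lie bracket of `L` -/
  br : L →ₗ[ℚ] L →ₗ[ℚ] L
  P_grade : ∀ {m n : ℕ} (v : V) (x : L), v ∈ Vg m → x ∈ Lg n → m ≠ n + 1 → P v x = 0
  P_perfect_V : ∀ v : V, v ≠ 0 → ∃ x, P v x ≠ 0
  P_perfect_L : ∀ x : L, x ≠ 0 → ∃ v, P v x ≠ 0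
  /-- `sL` is the full (graded) dual of `V` -/
  P_represents : ∀ (n : ℕ) (f : V →ₗ[ℚ] ℚ), ∃ x ∈ Lg n, ∀ v ∈ Vg (n + 1), P v x = f v
  /-- graded symmetry of `⟨d₁ v ; sx, sy⟩` in `sx`, `sy` (`|sx| = deg x + 1`) -/
  D_symm : ∀ {p q : ℕ} (v : V) (x y : L), x ∈ Lg p → y ∈ Lg q →
    D v x y = (-1 : ℚ) ^ ((p + 1) * (q + 1)) * D v y x
  br_grade : ∀ {p q : ℕ} (x y : L), x ∈ Lg p → y ∈ Lg q → br x y ∈ Lg (p + q)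
  /-- the defining formula `⟨v ; s[x,y]⟩ = (-1)^{deg y + 1} ⟨d₁ v ; sx, sy⟩` -/
  br_def : ∀ {q : ℕ} (x y : L) (v : V), y ∈ Lg q →
    P v (br x y) = (-1 : ℚ) ^ (q + 1) * D v x y

attribute [instance] HomotopyLieData.addV HomotopyLieData.modV
attribute [instance] HomotopyLieData.addL HomotopyLieData.modL

namespace HomotopyLieData

variable (M : HomotopyLieData)

/-- One step of the `d₁`-filtration: `stepFilt S = {v | d₁ v ∈ ∧ S}`, expressed via the
pairings: `d₁ v` pairs to zero with any `sx` annihilating `S`. -/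
def stepFilt (S : Submodule ℚ M.V) : Submodule ℚ M.V where
  carrier := {v | ∀ x : M.L, (∀ w ∈ S, M.P w x = 0) → ∀ y : M.L, M.D v x y = 0}
  add_mem' := by
    intro a b ha hb x hx y
    have h1 := ha x hx y
    have h2 := hb x hx y
    simp [map_add, LinearMap.add_apply, h1, h2]
  zero_mem' := by
    intro x hx y
    simp
  smul_mem' := by
    intro c a ha x hx y
    have h1 := ha x hx y
    simp [map_smul, LinearMap.smul_apply, h1]

/-- The filtration `V_0 = {v | d₁ v = 0}`, `V_i = {v | d₁ v ∈ ∧ V_{i-1}}`. -/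
def Vfilt : ℕ → Submodule ℚ M.V
  | 0 => M.stepFilt ⊥
  | n + 1 => M.stepFilt (Vfilt n)

/-- The shifted filtration: `VfiltS n = V_{n-1}` (so `VfiltS 0 = V_{-1} = 0`). -/
def VfiltS : ℕ → Submodule ℚ M.V
  | 0 => ⊥
  | n + 1 => M.Vfilt n

/-- The `d₁`-depth: the greatest `k` with `V_{k-1} ⊊ V_k`. -/
noncomputable def d1Depth : ℕ∞ :=
  sSup ((fun n : ℕ => (n : ℕ∞)) '' {n : ℕ | M.VfiltS n < M.VfiltS (n + 1)})

/-- `[L, L]^{(n)}`:  `[L,L]^{(0)} = L` and `[L,L]^{(l+1)} = [L, [L,L]^{(l)}]`. -/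
def bracketSeries : ℕ → Submodule ℚ M.L
  | 0 => ⊤
  | n + 1 => Submodule.span ℚ {z : M.L | ∃ x y, y ∈ bracketSeries n ∧ z = M.br x y}

/-- The Whitehead length of `L`: the greatest `n` with `[L,L]^{(n)} ≠ 0`. -/
noncomputable def whiteheadLength : ℕ∞ :=
  sSup ((fun n : ℕ => (n : ℕ∞)) '' {n : ℕ | M.bracketSeries n ≠ ⊥})

/-- The iterated bracket `x_{k_n, …, k_0} = [f 0, [f 1, [ …, [f (n-1), f n] …]]]`
(an element of `[L,L]^{(n)}`). -/
def iterBracket : (n : ℕ) → (Fin (n + 1) → M.L) → M.L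
  | 0, f => f 0
  | n + 1, f => M.br (f 0) (iterBracket n (Fin.tail f))

/-- `⟨a ∧ b ; sx, sy⟩` for homogeneous `a`, `b` of degrees `p`, `q`. -/
def wedgeP (p q : ℕ) (a b : M.V) (x y : M.L) : ℚ :=
  M.P a x * M.P b y + (-1 : ℚ) ^ (p * q) * (M.P b x * M.P a y)

/-- The annihilator in `V` of a subspace of `L`, with respect to the pairing `P`. -/
def annih (N : Submodule ℚ M.L) : Submodule ℚ M.V where
  carrier := {v | ∀ z ∈ N, M.P v z = 0}
  add_mem' := by
    intro a b ha hb z hz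
    have h1 := ha z hz
    have h2 := hb z hz
    simp [map_add, LinearMap.add_apply, h1, h2]
  zero_mem' := by
    intro z hz
    simp
  smul_mem' := by
    intro c a ha z hz
    have h1 := ha z hz
    simp [map_smul, LinearMap.smul_apply, h1]

end HomotopyLieData

/-! ### Auxiliary machinery -/

open DirectSum
open scoped Classical

set_option maxHeartbeats 1000000
set_option synthInstance.maxHeartbeats 400000

section DecompMachinery

variable {V : Type} [AddCommGroup V] [Module ℚ V] (A : ℕ → Submodule ℚ V)
  (h : DirectSum.IsInternal A)

/-- The equivalence between an internal direct sum and the ambient module. -/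
noncomputable def eL : (⨁ (i : ℕ), ↥(A i)) ≃ₗ[ℚ] V :=
  LinearEquiv.ofBijective (DirectSum.coeLinearMap A) h

/-- The projection onto the `q`-th graded piece. -/
noncomputable def compL (q : ℕ) : V →ₗ[ℚ] V :=
  (A q).subtype ∘ₗ (DirectSum.component ℚ ℕ (fun i => ↥(A i)) q) ∘ₗ ((eL A h).symm.toLinearMap)

lemma compL_apply (q x) : compL A h q x = ↑(((eL A h).symm x) q) := rfl

lemma compL_mem (q x) : compL A h q x ∈ A q := ((eL A h).symm x q).2

lemma eL_symm_of_mem {q z} (hz : z ∈ A q) :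
    (eL A h).symm z = DirectSum.of (fun i => ↥(A i)) q ⟨z, hz⟩ := by
  apply (eL A h).injective
  simp [eL, LinearEquiv.ofBijective_apply, DirectSum.coeLinearMap_of]
  exact (DirectSum.coeLinearMap_of A q ⟨z, hz⟩).symm

lemma compL_of_mem_self {q z} (hz : z ∈ A q) : compL A h q z = z := by
  rw [compL_apply, eL_symm_of_mem A h hz, DirectSum.of_eq_same]

lemma compL_of_mem_ne {q r z} (hz : z ∈ A q) (hne : r ≠ q) : compL A h r z = 0 := by
  rw [compL_apply, eL_symm_of_mem A h hz, DirectSum.of_eq_of_ne _ _ _ hne]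
  rfl

lemma sum_compL (x : V) :
    x = ∑ q ∈ DFinsupp.support ((eL A h).symm x), compL A h q x := by
  conv_lhs => rw [← (eL A h).apply_symm_apply x, ← DirectSum.sum_support_of ((eL A h).symm x)]
  rw [map_sum]
  refine Finset.sum_congr rfl fun q _ => ?_
  show (eL A h) _ = _
  rw [compL_apply]
  simp [eL, LinearEquiv.ofBijective_apply, DirectSum.coeLinearMap_of]
  exact DirectSum.coeLinearMap_of A q _

lemma compL_eq_zero_of_not_mem_support {x : V} {q}
    (hq : q ∉ DFinsupp.support ((eL A h).symm x)) : compL A h q x = 0 := by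
  have := DFinsupp.notMem_support_iff.mp hq
  rw [compL_apply, this]
  rfl

lemma hom_induction (hI : DirectSum.IsInternal A) {C : V → Prop} (h0 : C 0)
    (hadd : ∀ x y, C x → C y → C (x + y))
    (hhom : ∀ q, ∀ z ∈ A q, C z) (x : V) : C x := by
  have hx : x ∈ ⨆ i, A i := by rw [hI.submodule_iSup_eq_top]; trivial
  exact Submodule.iSup_induction (motive := C) A hx hhom h0 hadd

end DecompMachinery

private lemma neg_one_pow_ne (k : ℕ) : ((-1 : ℚ) ^ k) ≠ 0 := pow_ne_zero _ (by norm_num)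

namespace HomotopyLieData

variable (M : HomotopyLieData)

lemma homL_induction {C : M.L → Prop} (h0 : C 0) (hadd : ∀ x y, C x → C y → C (x + y))
    (hhom : ∀ q, ∀ z ∈ M.Lg q, C z) (x : M.L) : C x :=
  hom_induction M.Lg M.internalL h0 hadd hhom x

lemma homV_induction {C : M.V → Prop} (h0 : C 0) (hadd : ∀ x y, C x → C y → C (x + y))
    (hhom : ∀ q, ∀ z ∈ M.Vg q, C z) (x : M.V) : C x :=
  hom_induction M.Vg M.internalV h0 hadd hhom x

lemma mem_stepFilt {S : Submodule ℚ M.V} {v : M.V} :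
    v ∈ M.stepFilt S ↔ ∀ x : M.L, (∀ w ∈ S, M.P w x = 0) → ∀ y : M.L, M.D v x y = 0 :=
  Iff.rfl

lemma mem_annih {N : Submodule ℚ M.L} {v : M.V} :
    v ∈ M.annih N ↔ ∀ z ∈ N, M.P v z = 0 := Iff.rfl

lemma Lg_zero_eq_bot : M.Lg 0 = ⊥ := by
  apply le_antisymm _ bot_le
  intro x hx
  rw [Submodule.mem_bot]
  by_contra hne
  obtain ⟨v, hv⟩ := M.P_perfect_L x hne
  apply hv
  refine M.homV_induction (C := fun w => M.P w x = 0) (by simp)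
    (fun a b ha hb => by simp [map_add, LinearMap.add_apply, ha, hb]) ?_ v
  intro m w hw
  rcases eq_or_ne m 1 with h1 | h1
  · subst h1; rw [M.Vg_one] at hw
    rw [Submodule.mem_bot] at hw
    simp [hw]
  · exact M.P_grade w x hw hx (by omega)

lemma Lg_apply_eq_zero {q} {x : M.L} (hx : x ∈ M.Lg q)
    (h : ∀ v ∈ M.Vg (q + 1), M.P v x = 0) : x = 0 := by
  by_contra hne
  obtain ⟨v, hv⟩ := M.P_perfect_L x hne
  apply hv
  refine M.homV_induction (C := fun w => M.P w x = 0) (by simp)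
    (fun a b ha hb => by simp [map_add, LinearMap.add_apply, ha, hb]) ?_ v
  intro m w hw
  rcases eq_or_ne m (q + 1) with h1 | h1
  · exact h w (h1 ▸ hw)
  · exact M.P_grade w x hw hx h1

lemma Vg_apply_eq_zero {q} {v : M.V} (hv : v ∈ M.Vg (q + 1))
    (h : ∀ z ∈ M.Lg q, M.P v z = 0) : v = 0 := by
  by_contra hne
  obtain ⟨x, hx⟩ := M.P_perfect_V v hne
  apply hx
  refine M.homL_induction (C := fun z => M.P v z = 0) (by simp)
    (fun a b ha hb => by simp [map_add, ha, hb]) ?_ x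
  intro r z hz
  rcases eq_or_ne r q with h1 | h1
  · exact h z (h1 ▸ hz)
  · exact M.P_grade v z hv hz (by omega)

lemma D_eq_zero_iff_br {q} (v : M.V) (x y : M.L) (hy : y ∈ M.Lg q) :
    M.D v x y = 0 ↔ M.P v (M.br x y) = 0 := by
  rw [M.br_def x y v hy]
  constructor
  · intro h; rw [h, mul_zero]
  · intro h; exact (mul_eq_zero.mp h).resolve_left (neg_one_pow_ne _)

lemma D_symm_zero {p q} (v : M.V) (x y : M.L) (hx : x ∈ M.Lg p) (hy : y ∈ M.Lg q) :
    M.D v x y = 0 ↔ M.D v y x = 0 := by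
  rw [M.D_symm v x y hx hy]
  constructor
  · intro h; exact (mul_eq_zero.mp h).resolve_left (neg_one_pow_ne _)
  · intro h; rw [h, mul_zero]

lemma bs_succ_le (n : ℕ) : M.bracketSeries (n + 1) ≤ M.bracketSeries n := by
  induction n with
  | zero => exact le_top
  | succ k ih =>
    show Submodule.span ℚ _ ≤ _
    rw [Submodule.span_le]
    rintro z ⟨x, y, hy, rfl⟩
    exact Submodule.subset_span ⟨x, y, ih hy, rfl⟩

lemma bs_antitone {m n : ℕ} (h : m ≤ n) : M.bracketSeries n ≤ M.bracketSeries m :=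
  antitone_nat_of_succ_le M.bs_succ_le h

lemma bs_graded (n : ℕ) :
    M.bracketSeries n ≤ ⨆ q, (M.bracketSeries n ⊓ M.Lg q) := by
  induction n with
  | zero =>
    intro x _
    refine M.homL_induction (Submodule.zero_mem _) (fun a b ha hb => Submodule.add_mem _ ha hb) ?_ x
    intro q z hz
    exact Submodule.mem_iSup_of_mem q (Submodule.mem_inf.2 ⟨Submodule.mem_top, hz⟩)
  | succ k ih =>
    show Submodule.span ℚ _ ≤ _
    rw [Submodule.span_le]
    rintro z ⟨x, y, hy, rfl⟩
    have hy' : y ∈ ⨆ q, (M.bracketSeries k ⊓ M.Lg q) := ih hy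
    refine Submodule.iSup_induction (motive := fun y' => M.br x y' ∈ ⨆ q, (M.bracketSeries (k+1) ⊓ M.Lg q)) _ hy' ?_ (by simp) ?_
    · rintro q y' hy''
      obtain ⟨hybs, hyg⟩ := Submodule.mem_inf.1 hy''
      refine M.homL_induction (C := fun x' => M.br x' y' ∈ ⨆ q, (M.bracketSeries (k+1) ⊓ M.Lg q))
        (by simp [map_zero, LinearMap.zero_apply]) ?_ ?_ x
      · intro a b ha hb
        rw [map_add, LinearMap.add_apply]
        exact Submodule.add_mem _ ha hb
      · intro p x' hx'
        refine Submodule.mem_iSup_of_mem (p + q) (Submodule.mem_inf.2 ⟨?_, M.br_grade x' y' hx' hyg⟩)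
        exact Submodule.subset_span ⟨x', y', hybs, rfl⟩
    · intro a b ha hb
      rw [map_add]
      exact Submodule.add_mem _ ha hb

lemma inf_compL {N : Submodule ℚ M.L} {x : M.L} (q : ℕ)
    (hx : x ∈ ⨆ r, (N ⊓ M.Lg r)) : compL M.Lg M.internalL q x ∈ N := by
  refine Submodule.iSup_induction (motive := fun x' => compL M.Lg M.internalL q x' ∈ N) _ hx ?_ (by simp) ?_
  · rintro r x' hx'
    obtain ⟨hN, hg⟩ := Submodule.mem_inf.1 hx'
    rcases eq_or_ne q r with hqr | hqr
    · subst hqr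
      rw [compL_of_mem_self _ _ hg]; exact hN
    · rw [compL_of_mem_ne _ _ hg hqr]; exact Submodule.zero_mem _
  · intro a b ha hb
    rw [map_add]
    exact Submodule.add_mem _ ha hb

lemma bs_compL {n : ℕ} {x : M.L} (hx : x ∈ M.bracketSeries n) (q : ℕ) :
    compL M.Lg M.internalL q x ∈ M.bracketSeries n :=
  M.inf_compL q (M.bs_graded n hx)

lemma bs_le_iSup (n : ℕ) :
    M.bracketSeries n ≤ ⨆ q, ⨆ (_ : n < q), M.Lg q := by
  induction n with
  | zero =>
    intro x _
    refine M.homL_induction (Submodule.zero_mem _) (fun a b ha hb => Submodule.add_mem _ ha hb) ?_ x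
    intro q z hz
    rcases Nat.eq_zero_or_pos q with h0 | h0
    · subst h0
      rw [M.Lg_zero_eq_bot, Submodule.mem_bot] at hz
      simp [hz]
    · exact Submodule.mem_iSup_of_mem q (Submodule.mem_iSup_of_mem h0 hz)
  | succ k ih =>
    show Submodule.span ℚ _ ≤ _
    rw [Submodule.span_le]
    rintro z ⟨x, y, hy, rfl⟩
    have hy' := ih hy
    refine Submodule.iSup_induction (motive := fun y' => M.br x y' ∈ ⨆ q, ⨆ (_ : k + 1 < q), M.Lg q) _ hy' ?_ (by simp) ?_
    · intro r y' hy''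
      by_cases hkr : k < r
      · rw [iSup_pos hkr] at hy''
        refine M.homL_induction (C := fun x' => M.br x' y' ∈ ⨆ q, ⨆ (_ : k + 1 < q), M.Lg q)
          (by simp [map_zero, LinearMap.zero_apply]) ?_ ?_ x
        · intro a b ha hb
          rw [map_add, LinearMap.add_apply]
          exact Submodule.add_mem _ ha hb
        · intro p x' hx'
          rcases Nat.eq_zero_or_pos p with h0 | h0
          · subst h0
            rw [M.Lg_zero_eq_bot, Submodule.mem_bot] at hx'
            simp [hx', map_zero, LinearMap.zero_apply]
          · refine Submodule.mem_iSup_of_mem (p + r) (Submodule.mem_iSup_of_mem (by omega) ?_)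
            exact M.br_grade x' y' hx' hy''
      · rw [iSup_neg hkr, Submodule.mem_bot] at hy''
        simp [hy'']
    · intro a b ha hb
      rw [map_add]
      exact Submodule.add_mem _ ha hb

lemma eq_zero_of_mem_gt {q : ℕ} {z : M.L} (h1 : z ∈ M.Lg q)
    (h2 : z ∈ ⨆ r, ⨆ (_ : q < r), M.Lg r) : z = 0 := by
  have hd : Disjoint (M.Lg q) (⨆ r, ⨆ (_ : r ∈ {r : ℕ | q < r}), M.Lg r) :=
    (M.internalL.submodule_iSupIndep).disjoint_biSup (by simp)
  exact Submodule.disjoint_def.mp hd z h1 h2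

lemma eq_zero_of_bs {n q : ℕ} {z : M.L} (hz : z ∈ M.bracketSeries n) (hg : z ∈ M.Lg q)
    (h : q ≤ n) : z = 0 := by
  refine M.eq_zero_of_mem_gt hg ?_
  have hmem := M.bs_le_iSup n hz
  have hsub : (⨆ r, ⨆ (_ : n < r), M.Lg r) ≤ ⨆ r, ⨆ (_ : q < r), M.Lg r :=
    biSup_mono (fun r hr => lt_of_le_of_lt h hr)
  exact hsub hmem

lemma annih_mono {N N' : Submodule ℚ M.L} (h : N ≤ N') : M.annih N' ≤ M.annih N :=
  fun v hv z hz => hv z (h hz)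

lemma annih_top : M.annih ⊤ = ⊥ := by
  apply le_antisymm _ bot_le
  intro v hv
  rw [Submodule.mem_bot]
  by_contra hne
  obtain ⟨x, hx⟩ := M.P_perfect_V v hne
  exact hx (hv x trivial)

lemma P_compL {q : ℕ} {v : M.V} (hv : v ∈ M.Vg (q + 1)) (x : M.L) :
    M.P v x = M.P v (compL M.Lg M.internalL q x) := by
  by_cases hq : q ∈ DFinsupp.support ((eL M.Lg M.internalL).symm x)
  · conv_lhs => rw [sum_compL M.Lg M.internalL x]
    rw [map_sum, Finset.sum_eq_single_of_mem q hq]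
    intro r _ hr
    exact M.P_grade v _ hv (compL_mem _ _ r x) (by omega)
  · rw [compL_eq_zero_of_not_mem_support _ _ hq, map_zero]
    conv_lhs => rw [sum_compL M.Lg M.internalL x]
    rw [map_sum]
    apply Finset.sum_eq_zero
    intro r hrs
    have hrq : r ≠ q := fun e => hq (e ▸ hrs)
    exact M.P_grade v _ hv (compL_mem _ _ r x) (by omega)

lemma represent (q : ℕ) (g : Module.Dual ℚ (M.Lg q)) :
    ∃ v ∈ M.Vg (q + 1), ∀ z : M.Lg q, M.P v (z : M.L) = g z := by
  haveI := M.locFin (q + 1)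
  set Φ : M.Vg (q + 1) →ₗ[ℚ] Module.Dual ℚ (M.Lg q) :=
    (LinearMap.lcomp ℚ ℚ (M.Lg q).subtype).comp (M.P.comp (M.Vg (q + 1)).subtype) with hΦ
  set Ψ : M.Lg q →ₗ[ℚ] Module.Dual ℚ (M.Vg (q + 1)) :=
    (LinearMap.lcomp ℚ ℚ (M.Vg (q + 1)).subtype).comp (M.P.flip.comp (M.Lg q).subtype) with hΨ
  have hΨinj : Function.Injective Ψ := by
    rw [← LinearMap.ker_eq_bot, LinearMap.ker_eq_bot']
    intro z hz
    have hz' : ∀ v ∈ M.Vg (q + 1), M.P v (z : M.L) = 0 := by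
      intro v hv
      have := congrArg (fun f => f ⟨v, hv⟩) hz
      simpa [hΨ] using this
    exact Subtype.ext (M.Lg_apply_eq_zero z.2 hz')
  haveI : FiniteDimensional ℚ (M.Lg q) :=
    FiniteDimensional.of_injective Ψ hΨinj
  have hΦinj : Function.Injective Φ := by
    rw [← LinearMap.ker_eq_bot, LinearMap.ker_eq_bot']
    intro v hv
    have hv' : ∀ z ∈ M.Lg q, M.P (v : M.V) z = 0 := by
      intro z hzq
      have := congrArg (fun f => f ⟨z, hzq⟩) hv
      simpa [hΦ] using this
    exact Subtype.ext (M.Vg_apply_eq_zero v.2 hv')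
  have hr : Module.finrank ℚ (M.Lg q) = Module.finrank ℚ (M.Vg (q + 1)) := by
    apply le_antisymm
    · exact (LinearMap.finrank_le_finrank_of_injective hΨinj).trans_eq Subspace.dual_finrank_eq
    · exact (LinearMap.finrank_le_finrank_of_injective hΦinj).trans_eq Subspace.dual_finrank_eq
  have hsurj : Function.Surjective Φ := by
    rw [← LinearMap.range_eq_top]
    apply Submodule.eq_top_of_finrank_eq
    rw [LinearMap.finrank_range_of_inj hΦinj, Subspace.dual_finrank_eq, hr]
  obtain ⟨v, hv⟩ := hsurj g
  exact ⟨v.1, v.2, fun z => by rw [← hv]; rfl⟩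

lemma sep_bs {k q : ℕ} {z : M.L} (hzg : z ∈ M.Lg q) (hz : z ∉ M.bracketSeries k) :
    ∃ v ∈ M.Vg (q + 1), v ∈ M.annih (M.bracketSeries k) ∧ M.P v z ≠ 0 := by
  set N : Submodule ℚ (M.Lg q) := (M.bracketSeries k).comap (M.Lg q).subtype with hN
  have hπ : N.mkQ ⟨z, hzg⟩ ≠ 0 := by
    rw [Ne, Submodule.mkQ_apply, Submodule.Quotient.mk_eq_zero]
    exact hz
  obtain ⟨f, hf⟩ : ∃ f : Module.Dual ℚ ((M.Lg q) ⧸ N), f (N.mkQ ⟨z, hzg⟩) ≠ 0 := by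
    by_contra hall
    push_neg at hall
    exact hπ ((Module.forall_dual_apply_eq_zero_iff ℚ _).1 hall)
  obtain ⟨v, hvg, hv⟩ := M.represent q (f ∘ₗ N.mkQ)
  refine ⟨v, hvg, ?_, ?_⟩
  · intro w hw
    rw [M.P_compL hvg w]
    have hcw : compL M.Lg M.internalL q w ∈ M.bracketSeries k := M.bs_compL hw q
    have h1 := hv ⟨compL M.Lg M.internalL q w, compL_mem _ _ q w⟩
    rw [h1]
    have h2 : N.mkQ ⟨compL M.Lg M.internalL q w, compL_mem _ _ q w⟩ = 0 := by
      rw [Submodule.mkQ_apply, Submodule.Quotient.mk_eq_zero]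
      exact hcw
    simp [LinearMap.comp_apply, h2]
  · have h1 := hv ⟨z, hzg⟩
    rw [h1]
    simpa using hf

lemma double_annih {n : ℕ} {x : M.L}
    (hx : ∀ w ∈ M.annih (M.bracketSeries n), M.P w x = 0) : x ∈ M.bracketSeries n := by
  have hcomp : ∀ q, compL M.Lg M.internalL q x ∈ M.bracketSeries n := by
    intro q
    by_contra hq
    obtain ⟨v, hvg, hva, hvp⟩ := M.sep_bs (compL_mem _ _ q x) hq
    apply hvp
    have := hx v hva
    rwa [M.P_compL hvg x] at this
  have hsum : (∑ q ∈ DFinsupp.support ((eL M.Lg M.internalL).symm x),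
      compL M.Lg M.internalL q x) ∈ M.bracketSeries n :=
    Submodule.sum_mem _ fun q _ => hcomp q
  rwa [← sum_compL] at hsum

lemma Vfilt_eq : ∀ n, M.Vfilt n = M.annih (M.bracketSeries (n + 1)) := by
  intro n
  induction n with
  | zero =>
    apply le_antisymm
    · intro v hv
      rw [show M.Vfilt 0 = M.stepFilt ⊥ from rfl, mem_stepFilt] at hv
      have hD : ∀ x y, M.D v x y = 0 := fun x y => hv x (by simp) y
      rw [mem_annih]
      intro z hz
      refine Submodule.span_induction (p := fun z _ => M.P v z = 0) ?_ (by simp) ?_ ?_ hz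
      · rintro z ⟨x, y, -, rfl⟩
        refine M.homL_induction (C := fun y' => M.P v (M.br x y') = 0) (by simp) ?_ ?_ y
        · intro a b ha hb; simp [map_add, ha, hb]
        · intro q y' hy'
          exact (M.D_eq_zero_iff_br v x y' hy').1 (hD x y')
      · intro a b _ _ ha hb; simp [map_add, ha, hb]
      · intro c a _ ha; simp [map_smul, ha]
    · intro v hv
      rw [show M.Vfilt 0 = M.stepFilt ⊥ from rfl, mem_stepFilt]
      intro x _ y
      refine M.homL_induction (C := fun y' => M.D v x y' = 0) (by simp) ?_ ?_ y
      · intro a b ha hb; simp [map_add, ha, hb]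
      · intro q y' hy'
        refine (M.D_eq_zero_iff_br v x y' hy').2 (hv _ ?_)
        exact Submodule.subset_span ⟨x, y', Submodule.mem_top, rfl⟩
  | succ k ih =>
    apply le_antisymm
    · intro v hv
      rw [mem_annih]
      intro z hz
      rw [show M.Vfilt (k+1) = M.stepFilt (M.Vfilt k) from rfl, mem_stepFilt] at hv
      refine Submodule.span_induction (p := fun z _ => M.P v z = 0) ?_ (by simp) ?_ ?_ hz
      · rintro z ⟨x, y, hy, rfl⟩
        have hy2 : y ∈ ⨆ q, (M.bracketSeries (k + 1) ⊓ M.Lg q) := M.bs_graded _ hy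
        refine Submodule.iSup_induction (motive := fun y' => M.P v (M.br x y') = 0) _ hy2 ?_ (by simp) ?_
        · rintro q y' hy''
          obtain ⟨hybs, hyg⟩ := Submodule.mem_inf.1 hy''
          have hyperp : ∀ w ∈ M.Vfilt k, M.P w y' = 0 := fun w hw => by
            rw [ih] at hw; exact hw y' hybs
          have hvy' : ∀ u, M.D v y' u = 0 := hv y' hyperp
          refine M.homL_induction (C := fun x' => M.P v (M.br x' y') = 0)
            (by simp [map_zero, LinearMap.zero_apply]) ?_ ?_ x
          · intro a b ha hb
            simp [map_add, LinearMap.add_apply, ha, hb]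
          · intro p x' hxg
            refine (M.D_eq_zero_iff_br v x' y' hyg).1 ?_
            exact (M.D_symm_zero v x' y' hxg hyg).2 (hvy' x')
        · intro a b ha hb; simp [map_add, ha, hb]
      · intro a b _ _ ha hb; simp [map_add, ha, hb]
      · intro c a _ ha; simp [map_smul, ha]
    · intro v hv
      rw [show M.Vfilt (k+1) = M.stepFilt (M.Vfilt k) from rfl, mem_stepFilt]
      intro x hx y
      have hxbs : x ∈ M.bracketSeries (k + 1) :=
        M.double_annih (fun w hw => hx w (by rw [ih]; exact hw))
      refine M.homL_induction (C := fun y' => M.D v x y' = 0) (by simp) ?_ ?_ y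
      · intro a b ha hb; simp [map_add, ha, hb]
      · intro q y' hyg
        have hx2 : x ∈ ⨆ p, (M.bracketSeries (k + 1) ⊓ M.Lg p) := M.bs_graded _ hxbs
        refine Submodule.iSup_induction (motive := fun x' => M.D v x' y' = 0) _ hx2 ?_
          (by simp [map_zero, LinearMap.zero_apply]) ?_
        · rintro p x' hx''
          obtain ⟨hxbs', hxg⟩ := Submodule.mem_inf.1 hx''
          refine (M.D_symm_zero v x' y' hxg hyg).2 ?_
          refine (M.D_eq_zero_iff_br v y' x' hxg).2 ?_
          exact hv _ (Submodule.subset_span ⟨y', x', hxbs', rfl⟩)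
        · intro a b ha hb
          simp [map_add, LinearMap.add_apply, ha, hb]

lemma VfiltS_eq : ∀ k, M.VfiltS k = M.annih (M.bracketSeries k)
  | 0 => by
    show (⊥ : Submodule ℚ M.V) = M.annih ⊤
    rw [M.annih_top]
  | (k + 1) => M.Vfilt_eq k

lemma exists_step {n : ℕ} (h : M.bracketSeries n ≠ ⊥) :
    ∃ m, n ≤ m ∧ M.VfiltS m < M.VfiltS (m + 1) := by
  obtain ⟨z, hz, hzne⟩ := (Submodule.ne_bot_iff _).1 h
  obtain ⟨q, hq⟩ : ∃ q, compL M.Lg M.internalL q z ≠ 0 := by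
    by_contra hall
    push_neg at hall
    apply hzne
    have hs := sum_compL M.Lg M.internalL z
    rw [Finset.sum_congr rfl (fun r _ => hall r)] at hs
    simpa using hs
  have hz'bs : compL M.Lg M.internalL q z ∈ M.bracketSeries n := M.bs_compL hz q
  have hz'g : compL M.Lg M.internalL q z ∈ M.Lg q := compL_mem _ _ q z
  have hex : ∃ k, compL M.Lg M.internalL q z ∉ M.bracketSeries k :=
    ⟨q, fun hk => hq (M.eq_zero_of_bs hk hz'g le_rfl)⟩
  have hk0spec := Nat.find_spec hex
  have hnk : n < Nat.find hex := by
    by_contra hle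
    push_neg at hle
    exact hk0spec (M.bs_antitone hle hz'bs)
  obtain ⟨m, hm⟩ : ∃ m, Nat.find hex = m + 1 := ⟨Nat.find hex - 1, by omega⟩
  rw [hm] at hk0spec
  have hmem : compL M.Lg M.internalL q z ∈ M.bracketSeries m := by
    by_contra hnm
    exact Nat.find_min hex (by omega) hnm
  refine ⟨m, by omega, ?_⟩
  rw [M.VfiltS_eq, M.VfiltS_eq]
  obtain ⟨v, hvg, hva, hvp⟩ := M.sep_bs hz'g hk0spec
  refine lt_of_le_of_ne (M.annih_mono (M.bs_succ_le m)) ?_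
  intro heq
  have hv' : v ∈ M.annih (M.bracketSeries m) := heq ▸ hva
  exact hvp (hv' _ hmem)

end HomotopyLieData

/-- **Proposition 4.2** (`d₁`-depth ≥ Whitehead length).  Let `L` be the homotopy Lie
algebra associated with a minimal Sullivan model `(∧V, d)` of a simply connected space
`Y`.  Then `d₁-depth(Y) ≥ WL(L)`, where `WL(L)` is the greatest integer `n` such that
`[L,L]^{(n)} ≠ 0`. -/
theorem whiteheadLength_le_d1Depth (M : HomotopyLieData) :
    M.whiteheadLength ≤ M.d1Depth := by
  apply sSup_le
  rintro a ⟨n, hn, rfl⟩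
  obtain ⟨m, hnm, hm⟩ := M.exists_step hn
  calc ((n : ℕ∞)) ≤ (m : ℕ∞) := Nat.cast_le.2 hnm
    _ ≤ M.d1Depth := le_sSup ⟨m, hm, rfl⟩
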